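/- Let x ∈ (1/2, 1) be irrational with by-excess digits b_1, b_2, …. Then the regular continued fraction partial quotients of 1 − x are (n_1, b_{t_1} − 2, n_2, b_{t_2} − 2, n_3, …); that is, a_{2j−1}(1−x) = n_j and a_{2j}(1−x) = b_{t_j} − 2 for all j ≥ 1. -/

import Mathlib

open Set Filter

/-- The Gauss map `G(t) = 1/t − ⌊1/t⌋`. -/
noncomputable def gmap (t : ℝ) : ℝ := 1 / t - ⌊1 / t⌋

/-- `ra y n = a_{n+1}(y) = ⌊1/G^n(y)⌋`, the regular continued fraction partial
quotients of `y`. -/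
noncomputable def ra (y : ℝ) (n : ℕ) : ℤ := ⌊1 / (gmap^[n] y)⌋

/-- The by-excess continued fraction map `A_0(x) = ⌊1/x + 1⌋ − 1/x`. -/
noncomputable def exm (x : ℝ) : ℝ := ⌊1 / x + 1⌋ - 1 / x

/-- `bEx x n = b_{n+1} = ⌊1/A_0^n(x) + 1⌋`, the by-excess digits of `x`. -/
noncomputable def bEx (x : ℝ) (n : ℕ) : ℤ := ⌊1 / (exm^[n] x) + 1⌋

/-- Given the increasing enumeration `t` (0-indexed: `t j` is the paper's `t_{j+1}`),
`nOf t j` is the paper's `n_{j+1}`: `n_1 = t_1` and `n_{j+1} = t_{j+1} − t_j`. -/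
def nOf (t : ℕ → ℕ) : ℕ → ℕ
  | 0 => t 0
  | j + 1 => t (j + 1) - t j

lemma exm_basic {x : ℝ} (hirr : Irrational x) (h0 : 0 < x) :
    exm x ∈ Set.Ioo (0:ℝ) 1 ∧ Irrational (exm x) := by
  have h1x : Irrational (1 / x) := by rw [one_div]; exact hirr.inv
  have h1x' : Irrational (1 / x + 1) := by simpa using h1x.add_intCast 1
  refine ⟨⟨?_, ?_⟩, h1x.intCast_sub _⟩
  · have := Int.sub_one_lt_floor (1 / x + 1)
    simp only [exm]; linarith
  · have hle := Int.floor_le (1 / x + 1)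
    have hne : (1 / x + 1 : ℝ) ≠ (⌊1 / x + 1⌋ : ℤ) := h1x'.ne_int _
    simp only [exm]
    have : (⌊1 / x + 1⌋ : ℝ) < 1 / x + 1 := lt_of_le_of_ne hle (Ne.symm hne)
    linarith

lemma iter_basic {x : ℝ} (hirr : Irrational x) (hx : x ∈ Set.Ioo (0:ℝ) 1) (n : ℕ) :
    exm^[n] x ∈ Set.Ioo (0:ℝ) 1 ∧ Irrational (exm^[n] x) := by
  induction n with
  | zero => exact ⟨hx, hirr⟩
  | succ n ih =>
    rw [Function.iterate_succ_apply']
    exact exm_basic ih.2 ih.1.1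

lemma bEx_two_le {x : ℝ} (hirr : Irrational x) (hx : x ∈ Set.Ioo (0:ℝ) 1) (n : ℕ) :
    2 ≤ bEx x n := by
  obtain ⟨⟨h0, h1⟩, _⟩ := iter_basic hirr hx n
  have := one_lt_one_div h0 h1
  exact Int.le_floor.2 (by push_cast; linarith)

/-- single digit-2 step -/
lemma step2 {x : ℝ} (hirr : Irrational x) (hx : x ∈ Set.Ioo (0:ℝ) 1) (n : ℕ)
    (h2 : bEx x n = 2) :
    1 / (1 - exm^[n+1] x) = 1 / (1 - exm^[n] x) - 1 := by
  set u := exm^[n] x with hu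
  obtain ⟨⟨h0, h1⟩, _⟩ := iter_basic hirr hx n
  have hne : u ≠ 0 := ne_of_gt h0
  have hne1 : (1:ℝ) - u ≠ 0 := by intro h; rw [← hu] at h1; linarith
  have hxn1 : exm^[n+1] x = 2 - 1 / u := by
    rw [Function.iterate_succ_apply', exm]
    have : ⌊1 / u + 1⌋ = 2 := h2
    rw [← hu, this]; norm_num
  have harg : (1:ℝ) - (2 - 1/u) = (1 - u)/u := by field_simp; ring
  have key : 1 / (1 - u) - 1 = u / (1 - u) := by
    rw [div_sub_one hne1]; congr 1; ring
  rw [hxn1, key, harg, one_div_div]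

/-- run of digit-2 steps -/
lemma run2 {x : ℝ} (hirr : Irrational x) (hx : x ∈ Set.Ioo (0:ℝ) 1) (p : ℕ) :
    ∀ k : ℕ, (∀ i, i < k → bEx x (p + i) = 2) →
      1 / (1 - exm^[p + k] x) = 1 / (1 - exm^[p] x) - k := by
  intro k
  induction k with
  | zero => intro _; simp
  | succ k ih =>
    intro h
    have h1 := ih (fun i hi => h i (Nat.lt_succ_of_lt hi))
    have h2 := step2 hirr hx (p + k) (h k (Nat.lt_succ_self k))
    rw [show p + (k+1) = (p + k) + 1 from rfl, h2, h1]
    push_cast; ring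

lemma block {x : ℝ} (hirr : Irrational x) (hx : x ∈ Set.Ioo (0:ℝ) 1)
    (p q : ℕ) (hpq : p < q)
    (h2 : ∀ n, p ≤ n → n + 1 < q → bEx x n = 2)
    (hb : 3 ≤ bEx x (q-1)) :
    ⌊1 / (1 - exm^[p] x)⌋ = (q : ℤ) - p ∧
    ⌊1 / gmap (1 - exm^[p] x)⌋ = bEx x (q-1) - 2 ∧
    gmap (gmap (1 - exm^[p] x)) = 1 - exm^[q] x := by
  set w := exm^[q-1] x with hwdef
  obtain ⟨⟨hw0, hw1⟩, hwirr⟩ := iter_basic hirr hx (q-1)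
  rw [← hwdef] at hw0 hw1 hwirr
  have hwfl : (3:ℝ) ≤ 1 / w + 1 := by
    have := Int.le_floor.1 hb
    push_cast at this; exact this
  have hw2 : 2 < 1 / w := by
    rcases lt_or_eq_of_le (by linarith : (2:ℝ) ≤ 1 / w) with h | h
    · exact h
    · exfalso
      have : Irrational (1 / w) := by rw [one_div]; exact hwirr.inv
      exact this.ne_int 2 h.symm
  have hwhalf : 2 * w < 1 := (lt_div_iff₀ hw0).1 (by simpa using hw2)
  have h1w0 : (0:ℝ) < 1 - w := by linarith
  have hA : 1 < 1 / (1 - w) := one_lt_one_div h1w0 (by linarith)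
  have hB : 1 / (1 - w) < 2 := by rw [div_lt_iff₀ h1w0]; linarith
  have hk : p + (q - 1 - p) = q - 1 := by omega
  have hrun : 1 / (1 - w) = 1 / (1 - exm^[p] x) - (q - 1 - p : ℕ) := by
    have := run2 hirr hx p (q - 1 - p)
      (fun i hi => h2 (p + i) (Nat.le_add_right _ _) (by omega))
    rw [hk] at this
    rw [hwdef]; exact this
  have hcast : ((q - 1 - p : ℕ) : ℝ) = (q : ℝ) - 1 - p := by
    rw [Nat.cast_sub (by omega : p ≤ q - 1), Nat.cast_sub (by omega : 1 ≤ q)]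
    push_cast; ring
  set y := 1 - exm^[p] x with hydef
  have hyval : 1 / y = 1 / (1 - w) + ((q:ℝ) - 1 - p) := by
    rw [← hcast]; linarith [hrun]
  have hfl1 : ⌊1 / y⌋ = (q : ℤ) - p := by
    rw [Int.floor_eq_iff]
    constructor
    · push_cast; rw [hyval]; linarith
    · push_cast; rw [hyval]; linarith
  have hgy : gmap y = 1 / (1 - w) - 1 := by
    rw [gmap, hfl1, hyval]; push_cast; ring
  have hwne : w ≠ 0 := ne_of_gt hw0
  have h1wne : (1:ℝ) - w ≠ 0 := ne_of_gt h1w0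
  have hgyval : 1 / gmap y = 1 / w - 1 := by
    have key : 1 / (1 - w) - 1 = w / (1 - w) := by
      rw [div_sub_one h1wne]; congr 1; ring
    have key2 : 1 / w - 1 = (1 - w) / w := by
      rw [div_sub_one hwne]
    rw [hgy, key, one_div_div, key2]
  obtain ⟨⟨hz0, hz1⟩, _⟩ := iter_basic hirr hx q
  have hq1 : q - 1 + 1 = q := by omega
  have hzval : exm^[q] x = (bEx x (q-1) : ℝ) - 1 / w := by
    rw [← hq1, Function.iterate_succ_apply', exm, ← hwdef]
    rfl
  have hinvw : 1 / w = (bEx x (q-1) : ℝ) - exm^[q] x := by rw [hzval]; ring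
  have hfl2 : ⌊1 / gmap y⌋ = bEx x (q-1) - 2 := by
    rw [hgyval, hinvw, Int.floor_eq_iff]
    constructor
    · push_cast; linarith
    · push_cast; linarith
  refine ⟨hfl1, hfl2, ?_⟩
  rw [gmap, hfl2, hgyval, hinvw]
  push_cast
  ring

/-- `prevT t j` is the left endpoint of the `j`-th block: `0` for `j = 0`, else `t (j-1)`. -/
def prevT (t : ℕ → ℕ) : ℕ → ℕ
  | 0 => 0
  | j + 1 => t j

/-- Lemma 2.7: let `x ∈ (1/2,1)` be irrational with by-excess digits `b_1, b_2, …`,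
and let `t_1 < t_2 < ⋯` enumerate `{n ≥ 1 : b_n ≥ 3}` (here `t j` is the paper's
`t_{j+1}`). Then the regular continued fraction of `1 − x` is
`(n_1, b_{t_1} − 2, n_2, b_{t_2} − 2, n_3, …)`, i.e. `a_{2j−1}(1−x) = n_j` and
`a_{2j}(1−x) = b_{t_j} − 2` for all `j ≥ 1`. -/
theorem cf_one_sub_via_excess (x : ℝ) (hirr : Irrational x)
    (hx : x ∈ Set.Ioo (1 / 2 : ℝ) 1) (t : ℕ → ℕ)
    (ht1 : ∀ j, 1 ≤ t j) (hmono : StrictMono t)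
    (hmem : ∀ j, 3 ≤ bEx x (t j - 1))
    (hall : ∀ n : ℕ, 3 ≤ bEx x n → ∃ j, t j = n + 1) :
    ∀ j : ℕ, ra (1 - x) (2 * j) = (nOf t j : ℤ) ∧
      ra (1 - x) (2 * j + 1) = bEx x (t j - 1) - 2 := by
  have hx01 : x ∈ Set.Ioo (0:ℝ) 1 := ⟨by have := hx.1; linarith, hx.2⟩
  have hlt : ∀ j, prevT t j < t j := by
    intro j; cases j with
    | zero => exact ht1 0
    | succ j => exact hmono (Nat.lt_succ_self j)
  have hdig : ∀ j n, prevT t j ≤ n → n + 1 < t j → bEx x n = 2 := by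
    intro j n hn h1
    by_contra hne
    have h3 : 3 ≤ bEx x n := by
      have := bEx_two_le hirr hx01 n
      omega
    obtain ⟨j', hj'⟩ := hall n h3
    cases j with
    | zero =>
      have hlt0 : t j' < t 0 := by omega
      exact absurd (hmono.lt_iff_lt.1 hlt0) (Nat.not_lt_zero j')
    | succ j =>
      have h4 : t j < t j' := by simp only [prevT] at hn; omega
      have h5 : t j' < t (j+1) := by omega
      have := hmono.lt_iff_lt.1 h4
      have := hmono.lt_iff_lt.1 h5
      omega
  have hinv : ∀ j, gmap^[2*j] (1 - x) = 1 - exm^[prevT t j] x := by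
    intro j
    induction j with
    | zero => simp [prevT]
    | succ j ih =>
      have hblk := block hirr hx01 (prevT t j) (t j) (hlt j) (hdig j) (hmem j)
      have h2j : 2*(j+1) = 2*j + 1 + 1 := by ring
      rw [h2j, Function.iterate_succ_apply', Function.iterate_succ_apply', ih,
        hblk.2.2]
      rfl
  intro j
  have hblk := block hirr hx01 (prevT t j) (t j) (hlt j) (hdig j) (hmem j)
  constructor
  · rw [ra, hinv j, hblk.1]
    cases j with
    | zero => simp [nOf, prevT]
    | succ j =>
      simp only [nOf, prevT]
      rw [Nat.cast_sub (le_of_lt (hmono (Nat.lt_succ_self j)))]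
  · rw [ra, Function.iterate_succ_apply', hinv j, hblk.2.1]
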